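/- A skew-symmetric complex 6×6 matrix X (Xᵀ = -X) satisfies det X = 0 if and only if there exist u₁, v₁, u₂, v₂ ∈ ℂ⁶ with X = u₁ v₁ᵀ - v₁ u₁ᵀ + u₂ v₂ᵀ - v₂ u₂ᵀ, i.e. if and only if X has rank at most 4. Thus the cubic hypersurface Q₂ in P(Λ²ℂ⁶) ≅ P¹⁴ℂ, arising from the intermediate holomorphic nilpotent orbit of so*(12), is the chordal variety of the Grassmannian G₂(ℂ⁶). -/

import Mathlib

open Matrix Module Submodule

namespace SkewChordAux

lemma vecMulVec_mulVec' (u v z : Fin 6 → ℂ) :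
    vecMulVec u v *ᵥ z = (v ⬝ᵥ z) • u := by
  ext k
  simp only [mulVec, dotProduct, vecMulVec_apply, Pi.smul_apply, smul_eq_mul, Finset.sum_mul]
  exact Finset.sum_congr rfl fun l _ => by ring

lemma vecMulVec_transpose' (u v : Fin 6 → ℂ) :
    (vecMulVec u v)ᵀ = vecMulVec v u := by
  ext k l; simp [vecMulVec_apply, mul_comm]

lemma skew_entry {X : Matrix (Fin 6) (Fin 6) ℂ} (hX : Xᵀ = -X) (i j : Fin 6) :
    X j i = -X i j := by
  have := congrFun (congrFun hX i) j
  simpa [transpose_apply] using this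

lemma skew_diag {X : Matrix (Fin 6) (Fin 6) ℂ} (hX : Xᵀ = -X) (i : Fin 6) :
    X i i = 0 := by
  have h := skew_entry hX i i
  linear_combination h / 2

lemma left_ker {X : Matrix (Fin 6) (Fin 6) ℂ} (hX : Xᵀ = -X) {z : Fin 6 → ℂ}
    (hz : X *ᵥ z = 0) : z ᵥ* X = 0 := by
  have hX' : X = -Xᵀ := by rw [hX]; simp
  rw [hX']
  simp [Matrix.vecMul_neg, Matrix.vecMul_transpose, hz]

lemma step (X : Matrix (Fin 6) (Fin 6) ℂ) (hX : Xᵀ = -X) {i j : Fin 6}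
    (ha : X i j ≠ 0) :
    ∃ u v : Fin 6 → ℂ, ∃ Y : Matrix (Fin 6) (Fin 6) ℂ,
      X = (vecMulVec u v - vecMulVec v u) + Y ∧ Yᵀ = -Y ∧
      finrank ℂ (LinearMap.ker X.mulVecLin) + 2 ≤ finrank ℂ (LinearMap.ker Y.mulVecLin) := by
  set a := X i j with ha_def
  set u : Fin 6 → ℂ := X *ᵥ Pi.single i 1 with hu_def
  set v : Fin 6 → ℂ := a⁻¹ • (X *ᵥ Pi.single j 1) with hv_def
  set D : Matrix (Fin 6) (Fin 6) ℂ := vecMulVec u v - vecMulVec v u with hD_def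
  set Y : Matrix (Fin 6) (Fin 6) ℂ := X - D with hY_def
  have hij : i ≠ j := by rintro rfl; exact ha (skew_diag hX i)
  have hui : u i = 0 := by simp [hu_def, mulVec_single, skew_diag hX i]
  have huj : u j = -a := by simp [hu_def, mulVec_single, skew_entry hX i j]; rfl
  have hvi : v i = 1 := by
    simp [hv_def, mulVec_single, ← ha_def]
    exact inv_mul_cancel₀ ha
  have hvj : v j = 0 := by simp [hv_def, mulVec_single, skew_diag hX j]
  -- mulVec of D
  have hD : ∀ z, D *ᵥ z = (v ⬝ᵥ z) • u - (u ⬝ᵥ z) • v := by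
    intro z
    rw [hD_def, Matrix.sub_mulVec, vecMulVec_mulVec', vecMulVec_mulVec']
  -- Y is skew
  have hYskew : Yᵀ = -Y := by
    rw [hY_def, transpose_sub, hX, hD_def, transpose_sub, vecMulVec_transpose',
      vecMulVec_transpose']
    abel
  -- kernel preservation
  have hker : ∀ z, X *ᵥ z = 0 → Y *ᵥ z = 0 := by
    intro z hz
    have hl := left_ker hX hz
    have h1 : u ⬝ᵥ z = 0 := by
      rw [hu_def, dotProduct_comm, dotProduct_mulVec, hl, zero_dotProduct]
    have h2 : v ⬝ᵥ z = 0 := by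
      rw [hv_def, smul_dotProduct, dotProduct_comm, dotProduct_mulVec, hl,
        zero_dotProduct, smul_zero]
    rw [hY_def, Matrix.sub_mulVec, hz, hD z, h1, h2]
    simp
  -- Y kills e_i and e_j
  have hYi : Y *ᵥ Pi.single i 1 = 0 := by
    rw [hY_def, Matrix.sub_mulVec, hD]
    simp [dotProduct_single, hvi, hui, ← hu_def]
  have hYj : Y *ᵥ Pi.single j 1 = 0 := by
    rw [hY_def, Matrix.sub_mulVec, hD]
    have : X *ᵥ Pi.single j 1 = a • v := by
      rw [hv_def, smul_smul, mul_inv_cancel₀ ha, one_smul]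
    rw [this]
    simp [dotProduct_single, hvj, huj, smul_smul]
  refine ⟨u, v, Y, by rw [hY_def, hD_def]; abel, hYskew, ?_⟩
  -- dimension count
  set K := LinearMap.ker X.mulVecLin with hK_def
  set L : Submodule ℂ (Fin 6 → ℂ) := span ℂ ({Pi.single i 1, Pi.single j 1} : Set (Fin 6 → ℂ)) with hL_def
  have hLI : LinearIndependent ℂ (![Pi.single i 1, Pi.single j 1] : Fin 2 → (Fin 6 → ℂ)) := by
    rw [LinearIndependent.pair_iff]
    intro s t hst
    have h1 := congrFun hst i
    have h2 := congrFun hst j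
    simp [Pi.single_apply, hij, hij.symm] at h1 h2
    exact ⟨h1, h2⟩
  have hL2 : finrank ℂ L = 2 := by
    have hrange : Set.range (![Pi.single i 1, Pi.single j 1] : Fin 2 → (Fin 6 → ℂ))
        = ({Pi.single i 1, Pi.single j 1} : Set (Fin 6 → ℂ)) := by
      ext z
      simp [Fin.exists_fin_two]
      tauto
    have := finrank_span_eq_card hLI
    rw [hrange] at this
    rw [hL_def, this, Fintype.card_fin]
  have hKL : K ⊓ L = ⊥ := by
    rw [eq_bot_iff]
    rintro z ⟨hzK, hzL⟩
    obtain ⟨α, β, hz⟩ := Submodule.mem_span_pair.mp hzL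
    have hXz : X *ᵥ z = 0 := by
      simpa [Matrix.mulVecLin_apply] using (LinearMap.mem_ker.mp hzK)
    have hXz' : α • (X *ᵥ Pi.single i 1) + β • (X *ᵥ Pi.single j 1) = 0 := by
      rw [← Matrix.mulVec_smul, ← Matrix.mulVec_smul, ← Matrix.mulVec_add, hz, hXz]
    have hcj := congrFun hXz' j
    have hci := congrFun hXz' i
    simp [mulVec_single, skew_entry hX i j, skew_diag hX i, skew_diag hX j] at hcj hci
    have hα : α = 0 := by
      rcases hcj with h | h
      · exact h
      · exact absurd h ha
    have hβ : β = 0 := by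
      rcases hci with h | h
      · exact h
      · exact absurd h ha
    have : z = 0 := by rw [← hz, hα, hβ]; simp
    simp [this]
  have hsup : K ⊔ L ≤ LinearMap.ker Y.mulVecLin := by
    apply sup_le
    · intro z hz
      exact LinearMap.mem_ker.mpr (by
        simpa [Matrix.mulVecLin_apply] using
          hker z (by simpa [Matrix.mulVecLin_apply] using LinearMap.mem_ker.mp hz))
    · rw [hL_def, span_le]
      rintro z (rfl | rfl)
      · exact LinearMap.mem_ker.mpr (by simpa [Matrix.mulVecLin_apply] using hYi)
      · exact LinearMap.mem_ker.mpr (by simpa [Matrix.mulVecLin_apply] using hYj)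
  have hdim : finrank ℂ (K ⊔ L : Submodule ℂ (Fin 6 → ℂ)) = finrank ℂ K + 2 := by
    have := Submodule.finrank_sup_add_finrank_inf_eq K L
    rw [hKL, finrank_bot, hL2] at this
    omega
  calc finrank ℂ K + 2 = finrank ℂ (K ⊔ L : Submodule ℂ (Fin 6 → ℂ)) := hdim.symm
    _ ≤ finrank ℂ (LinearMap.ker Y.mulVecLin) := Submodule.finrank_mono hsup

lemma ker_two (X : Matrix (Fin 6) (Fin 6) ℂ) (hX : Xᵀ = -X) (hdet : X.det = 0) :
    2 ≤ finrank ℂ (LinearMap.ker X.mulVecLin) := by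
  obtain ⟨w, hw0, hw⟩ := Matrix.exists_mulVec_eq_zero_iff.mpr hdet
  obtain ⟨k, hk⟩ : ∃ k, w k ≠ 0 := by
    by_contra h
    push_neg at h
    exact hw0 (funext h)
  set Y : Matrix {m : Fin 6 // m ≠ k} {m : Fin 6 // m ≠ k} ℂ :=
    X.submatrix Subtype.val Subtype.val with hY_def
  have hcard : Fintype.card {m : Fin 6 // m ≠ k} = 5 := by
    simp [Fintype.card_subtype_compl]
  have hYskew : Yᵀ = -Y := by
    ext ⟨m, hm⟩ ⟨l, hl⟩
    simp [hY_def, skew_entry hX l m]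
  have hYdet : Y.det = 0 := by
    have h1 : Y.det = -Y.det := by
      conv_lhs => rw [← Matrix.det_transpose Y]
      rw [hYskew, Matrix.det_neg, hcard]
      ring
    linear_combination h1 / 2
  obtain ⟨y, hy0, hy⟩ := Matrix.exists_mulVec_eq_zero_iff.mpr hYdet
  set yt : Fin 6 → ℂ := fun m => if h : m = k then 0 else y ⟨m, h⟩ with hyt_def
  have hytk : yt k = 0 := by simp [hyt_def]
  have hytm : ∀ (m : Fin 6) (h : m ≠ k), yt m = y ⟨m, h⟩ := by
    intro m h; simp [hyt_def, h]
  have hcomp : ∀ (m : Fin 6), m ≠ k → (X *ᵥ yt) m = 0 := by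
    intro m hm
    have : (X *ᵥ yt) m = ∑ l : {l : Fin 6 // l ≠ k}, X m l.val * yt l.val := by
      rw [mulVec, dotProduct, Fintype.sum_eq_add_sum_compl k, hytk, mul_zero, zero_add]
      exact Finset.sum_subtype ({k}ᶜ : Finset (Fin 6)) (by simp) (fun l => X m l * yt l)
    rw [this]
    have h2 : ∀ l : {l : Fin 6 // l ≠ k}, X m l.val * yt l.val = Y ⟨m, hm⟩ l * y l := by
      rintro ⟨l, hl⟩
      rw [hytm l hl]
      simp [hY_def]
    rw [Finset.sum_congr rfl (fun l _ => h2 l)]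
    exact congrFun hy ⟨m, hm⟩
  have hsingle : X *ᵥ yt = Pi.single k ((X *ᵥ yt) k) := by
    funext m
    by_cases hm : m = k
    · subst hm; simp
    · rw [hcomp m hm, Pi.single_eq_of_ne hm]
  have hXyt : X *ᵥ yt = 0 := by
    have hwX := left_ker hX hw
    have hdot : w ⬝ᵥ (X *ᵥ yt) = 0 := by
      rw [dotProduct_mulVec, hwX, zero_dotProduct]
    rw [hsingle, dotProduct_single] at hdot
    rcases mul_eq_zero.mp hdot with h | h
    · exact absurd h hk
    · rw [hsingle, h]; simp
  have hyt0 : yt ≠ 0 := by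
    obtain ⟨l, hl⟩ : ∃ l, y l ≠ 0 := by
      by_contra h
      push_neg at h
      exact hy0 (funext h)
    intro h
    apply hl
    have := congrFun h l.val
    rwa [hytm l.val l.prop, Subtype.coe_eta, Pi.zero_apply] at this
  have hLI : LinearIndependent ℂ (![w, yt] : Fin 2 → (Fin 6 → ℂ)) := by
    rw [LinearIndependent.pair_iff]
    intro s t hst
    have h1 := congrFun hst k
    simp [hytk] at h1
    have hs : s = 0 := by
      rcases h1 with h | h
      · exact h
      · exact absurd h hk
    refine ⟨hs, ?_⟩
    rw [hs, zero_smul, zero_add] at hst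
    rcases smul_eq_zero.mp hst with h | h
    · exact h
    · exact absurd h hyt0
  have hle : span ℂ (Set.range (![w, yt] : Fin 2 → (Fin 6 → ℂ)))
      ≤ LinearMap.ker X.mulVecLin := by
    rw [span_le]
    rintro z ⟨l, rfl⟩
    fin_cases l
    · exact LinearMap.mem_ker.mpr (by simpa [Matrix.mulVecLin_apply] using hw)
    · exact LinearMap.mem_ker.mpr (by simpa [Matrix.mulVecLin_apply] using hXyt)
  have := finrank_span_eq_card hLI
  rw [Fintype.card_fin] at this
  calc (2:ℕ) = finrank ℂ (span ℂ (Set.range (![w, yt] : Fin 2 → (Fin 6 → ℂ)))) := this.symm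
    _ ≤ finrank ℂ (LinearMap.ker X.mulVecLin) := Submodule.finrank_mono hle

lemma rank_le_of_decomp (X : Matrix (Fin 6) (Fin 6) ℂ) (u₁ v₁ u₂ v₂ : Fin 6 → ℂ)
    (h : X = (vecMulVec u₁ v₁ - vecMulVec v₁ u₁) +
          (vecMulVec u₂ v₂ - vecMulVec v₂ u₂)) : X.rank ≤ 4 := by
  classical
  set f : Fin 4 → (Fin 6 → ℂ) := ![u₁, v₁, u₂, v₂] with hf_def
  have hm0 : u₁ ∈ Set.range f := ⟨0, rfl⟩
  have hm1 : v₁ ∈ Set.range f := ⟨1, rfl⟩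
  have hm2 : u₂ ∈ Set.range f := ⟨2, rfl⟩
  have hm3 : v₂ ∈ Set.range f := ⟨3, rfl⟩
  have hrange : LinearMap.range X.mulVecLin ≤ span ℂ (Set.range f) := by
    rintro x ⟨z, rfl⟩
    rw [Matrix.mulVecLin_apply, h, Matrix.add_mulVec, Matrix.sub_mulVec, Matrix.sub_mulVec,
      vecMulVec_mulVec', vecMulVec_mulVec', vecMulVec_mulVec', vecMulVec_mulVec']
    exact add_mem
      (sub_mem (smul_mem _ _ (subset_span hm0)) (smul_mem _ _ (subset_span hm1)))
      (sub_mem (smul_mem _ _ (subset_span hm2)) (smul_mem _ _ (subset_span hm3)))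
  have hfr : finrank ℂ (span ℂ (Set.range f)) ≤ 4 := by
    refine (finrank_span_le_card (Set.range f)).trans ?_
    rw [Set.toFinset_range]
    exact Finset.card_image_le.trans (by simp)
  rw [Matrix.rank]
  exact (Submodule.finrank_mono hrange).trans hfr

lemma det_zero_of_rank_le (X : Matrix (Fin 6) (Fin 6) ℂ) (h : X.rank ≤ 4) : X.det = 0 := by
  by_contra hdet
  have hunit : IsUnit X := (Matrix.isUnit_iff_isUnit_det X).mpr (Ne.isUnit hdet)
  have hr := Matrix.rank_of_isUnit X hunit
  rw [Fintype.card_fin] at hr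
  omega

end SkewChordAux

open SkewChordAux in
/-- A skew-symmetric complex `6×6` matrix `X` satisfies `det X = 0` if and
only if `X` is a sum of two decomposables
`u₁ v₁ᵀ - v₁ u₁ᵀ + u₂ v₂ᵀ - v₂ u₂ᵀ`, i.e. if and only if `X` has rank at most
`4`. Thus the cubic hypersurface `Q₂` in `P(Λ²ℂ⁶) ≅ P¹⁴ℂ`, arising from the
intermediate holomorphic nilpotent orbit of `so*(12)`, is the chordal variety
of the Grassmannian `G₂(ℂ⁶)`. -/
theorem skew_det_zero_iff_sum_two_decomposables
    (X : Matrix (Fin 6) (Fin 6) ℂ) (hX : Xᵀ = -X) :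
    (X.det = 0 ↔ ∃ u₁ v₁ u₂ v₂ : Fin 6 → ℂ,
      X = (vecMulVec u₁ v₁ - vecMulVec v₁ u₁) +
          (vecMulVec u₂ v₂ - vecMulVec v₂ u₂)) ∧
    (X.det = 0 ↔ X.rank ≤ 4) := by
  have hdecomp : X.det = 0 → ∃ u₁ v₁ u₂ v₂ : Fin 6 → ℂ,
      X = (vecMulVec u₁ v₁ - vecMulVec v₁ u₁) +
          (vecMulVec u₂ v₂ - vecMulVec v₂ u₂) := by
    intro hdet
    by_cases hX0 : X = 0
    · refine ⟨0, 0, 0, 0, ?_⟩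
      ext k l
      simp [hX0, vecMulVec_apply]
    · obtain ⟨i, j, hij⟩ : ∃ i j, X i j ≠ 0 := by
        by_contra h
        push_neg at h
        exact hX0 (by ext m l; simp [h])
      obtain ⟨u₁, v₁, Y, hXY, hYs, hYr⟩ := step X hX hij
      have h2 := ker_two X hX hdet
      by_cases hY0 : Y = 0
      · refine ⟨u₁, v₁, 0, 0, ?_⟩
        rw [hXY, hY0]
        ext k l
        simp [vecMulVec_apply]
      · obtain ⟨p, q, hpq⟩ : ∃ p q, Y p q ≠ 0 := by
          by_contra h
          push_neg at h
          exact hY0 (by ext m l; simp [h])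
        obtain ⟨u₂, v₂, Z, hYZ, hZs, hZr⟩ := step Y hYs hpq
        have htop : LinearMap.ker Z.mulVecLin = ⊤ := by
          apply Submodule.eq_top_of_finrank_eq
          have hle : finrank ℂ (LinearMap.ker Z.mulVecLin) ≤ finrank ℂ (Fin 6 → ℂ) :=
            Submodule.finrank_le _
          have h6 : finrank ℂ (Fin 6 → ℂ) = 6 := by simp
          omega
        have hZ0 : Z = 0 := by
          ext m l
          have hmem : (Pi.single l 1 : Fin 6 → ℂ) ∈ LinearMap.ker Z.mulVecLin := by
            rw [htop]; trivial
          have hz : Z *ᵥ Pi.single l 1 = 0 := by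
            simpa [Matrix.mulVecLin_apply] using hmem
          simpa [mulVec_single] using congrFun hz m
        exact ⟨u₁, v₁, u₂, v₂, by rw [hXY, hYZ, hZ0, add_zero]⟩
  refine ⟨⟨hdecomp, ?_⟩, ⟨?_, det_zero_of_rank_le X⟩⟩
  · rintro ⟨u₁, v₁, u₂, v₂, h⟩
    exact det_zero_of_rank_le X (rank_le_of_decomp X u₁ v₁ u₂ v₂ h)
  · intro hdet
    obtain ⟨u₁, v₁, u₂, v₂, h⟩ := hdecomp hdet
    exact rank_le_of_decomp X u₁ v₁ u₂ v₂ h
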